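/- Wave equation for the first auxiliary function Φ₁: let N₁ ∈ ℕ and let u : (0,T) × (0,∞) → ℝ be a C² function satisfying, for all (t,r), (1 + 2 sin²u/r²)(∂ₜₜu − ∂ᵣᵣu) − (2/r)∂ᵣu + (sin 2u / r²)(1 + (∂ₜu)² − (∂ᵣu)² + sin²u/r²) = 0. Define Φ₁(t,r) = ∫_{N₁π}^{u(t,r)} A(r,w)^{1/2} dw. Then for all (t,r) ∈ (0,T) × (0,∞), ∂ₜₜΦ₁ − ∂ᵣᵣΦ₁ − (2/r)∂ᵣΦ₁ = −(2/r²)Φ₁ + (1/2) ∫_{N₁π}^{u(t,r)} [ 3(A(r,w)^{3/2} − A(r,w)^{1/2}) + A(r,w)^{-1/2} − A(r,w)^{-3/2} ] dw. -/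

import Mathlib

open Real Set

/-- Time partial derivative. -/
noncomputable def pdt (f : ℝ → ℝ → ℝ) : ℝ → ℝ → ℝ :=
  fun t r => deriv (fun s => f s r) t

/-- Radial partial derivative. -/
noncomputable def pdr (f : ℝ → ℝ → ℝ) : ℝ → ℝ → ℝ :=
  fun t r => deriv (fun s => f t s) r

/-- `A(r,w) = 1 + 2 sin² w / r²`. -/
noncomputable def Afun (r w : ℝ) : ℝ := 1 + 2 * Real.sin w ^ 2 / r ^ 2


open MeasureTheory intervalIntegral Asymptotics Filter Topology

namespace SK

noncomputable def f (r w : ℝ) : ℝ := (Afun r w) ^ ((1:ℝ)/2)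
noncomputable def fw (r w : ℝ) : ℝ := (Real.sin (2*w) / r^2) * (Afun r w) ^ (-(1:ℝ)/2)
noncomputable def fr (r w : ℝ) : ℝ := (-2 * Real.sin w ^ 2 / r ^ 3) * (Afun r w) ^ (-(1:ℝ)/2)
noncomputable def frr (r w : ℝ) : ℝ :=
  (6 * Real.sin w ^ 2 / r ^ 4) * (Afun r w) ^ (-(1:ℝ)/2)
    - (4 * Real.sin w ^ 4 / r ^ 6) * (Afun r w) ^ (-(3:ℝ)/2)
noncomputable def Hf (r w : ℝ) : ℝ :=
  3 * ((Afun r w) ^ ((3:ℝ)/2) - (Afun r w) ^ ((1:ℝ)/2))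
    + (Afun r w) ^ (-(1:ℝ)/2) - (Afun r w) ^ (-(3:ℝ)/2)
noncomputable def Gf (r w : ℝ) : ℝ :=
  -frr r w - (2/r) * fr r w + (2/r^2) * f r w - (1/2) * Hf r w
noncomputable def Ψ (r w : ℝ) : ℝ :=
  (Real.sin (2*w) * ((Afun r w + 1) * (Afun r w) ^ (-(1:ℝ)/2))) / (2*r^2)

lemma one_le_A {r : ℝ} (hr : r ≠ 0) (w : ℝ) : 1 ≤ Afun r w := by
  have : 0 ≤ 2 * Real.sin w ^ 2 / r ^ 2 := by positivity
  simp [Afun]; linarith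

lemma A_pos {r : ℝ} (hr : r ≠ 0) (w : ℝ) : 0 < Afun r w :=
  lt_of_lt_of_le one_pos (one_le_A hr w)

lemma hasDerivAt_A_w (r w : ℝ) :
    HasDerivAt (fun w' => Afun r w') (2 * Real.sin (2*w) / r ^ 2) w := by
  have h := (Real.hasDerivAt_sin w).pow 2
  have := (h.const_mul (2:ℝ)).div_const (r^2) |>.const_add 1
  refine this.congr_deriv ?_
  rw [Real.sin_two_mul]; push_cast; ring

lemma hasDerivAt_A_r {r : ℝ} (hr : r ≠ 0) (w : ℝ) :
    HasDerivAt (fun ρ => Afun ρ w) (-4 * Real.sin w ^ 2 / r ^ 3) r := by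
  have h : HasDerivAt (fun ρ : ℝ => ρ ^ 2) (2 * r) r := by
    simpa using hasDerivAt_pow 2 r
  have h2 : HasDerivAt (fun ρ : ℝ => 2 * Real.sin w ^ 2 / ρ ^ 2)
      ((0 * (r^2) - 2 * Real.sin w ^ 2 * (2*r)) / (r^2)^2) r :=
    (hasDerivAt_const r (2 * Real.sin w ^ 2)).div h (by positivity)
  have := h2.const_add 1
  refine this.congr_deriv ?_
  field_simp; ring

lemma hasDerivAt_rpow_comp {g : ℝ → ℝ} {g' x : ℝ} (hg : HasDerivAt g g' x)
    (hpos : 0 < g x) (p : ℝ) :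
    HasDerivAt (fun y => g y ^ p) (p * g x ^ (p - 1) * g') x := by
  have := (Real.hasDerivAt_rpow_const (x := g x) (p := p) (Or.inl hpos.ne')).comp x hg
  exact this.congr_deriv (by ring)

/- rpow rewriting lemmas -/
lemma rpow_neg_half {a : ℝ} (h : 0 < a) : a ^ (-(1:ℝ)/2) = a ^ ((1:ℝ)/2) / a := by
  rw [show (-(1:ℝ)/2) = (1:ℝ)/2 - 1 by norm_num, Real.rpow_sub h, Real.rpow_one]

lemma rpow_neg_three_half {a : ℝ} (h : 0 < a) : a ^ (-(3:ℝ)/2) = a ^ ((1:ℝ)/2) / a ^ 2 := by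
  rw [show (-(3:ℝ)/2) = (1:ℝ)/2 - 2 by norm_num, Real.rpow_sub h]
  norm_num [Real.rpow_two]

lemma rpow_three_half {a : ℝ} (h : 0 < a) : a ^ ((3:ℝ)/2) = a * a ^ ((1:ℝ)/2) := by
  rw [show ((3:ℝ)/2) = 1 + (1:ℝ)/2 by norm_num, Real.rpow_add h, Real.rpow_one]

lemma sq_rpow_half {a : ℝ} (h : 0 < a) : (a ^ ((1:ℝ)/2)) ^ 2 = a := by
  rw [← Real.rpow_natCast (a ^ ((1:ℝ)/2)) 2, ← Real.rpow_mul h.le]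
  norm_num

lemma rpow_half_pos {a : ℝ} (h : 0 < a) : 0 < a ^ ((1:ℝ)/2) := Real.rpow_pos_of_pos h _

/-- derivative of f in w -/
lemma hasDerivAt_f_w {r : ℝ} (hr : r ≠ 0) (w : ℝ) :
    HasDerivAt (fun w' => f r w') (fw r w) w := by
  have h := hasDerivAt_rpow_comp (hasDerivAt_A_w r w) (A_pos hr w) ((1:ℝ)/2)
  refine h.congr_deriv ?_
  rw [show ((1:ℝ)/2 - 1) = -(1:ℝ)/2 by norm_num]
  unfold fw; ring

/-- derivative of f in r -/
lemma hasDerivAt_f_r {r : ℝ} (hr : r ≠ 0) (w : ℝ) :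
    HasDerivAt (fun ρ => f ρ w) (fr r w) r := by
  have h := hasDerivAt_rpow_comp (hasDerivAt_A_r hr w) (A_pos hr w) ((1:ℝ)/2)
  refine h.congr_deriv ?_
  rw [show ((1:ℝ)/2 - 1) = -(1:ℝ)/2 by norm_num]
  unfold fr; ring

/-- derivative of fr in r -/
lemma hasDerivAt_fr_r {r : ℝ} (hr : r ≠ 0) (w : ℝ) :
    HasDerivAt (fun ρ => fr ρ w) (frr r w) r := by
  have h1 : HasDerivAt (fun ρ : ℝ => -2 * Real.sin w ^ 2 / ρ ^ 3)
      ((0 * (r^3) - (-2 * Real.sin w ^ 2) * (3 * r ^ 2)) / (r^3)^2) r := by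
    have h3 : HasDerivAt (fun ρ : ℝ => ρ ^ 3) (3 * r ^ 2) r := by
      simpa using hasDerivAt_pow 3 r
    exact (hasDerivAt_const r (-2 * Real.sin w ^ 2)).div h3 (pow_ne_zero 3 hr)
  have h2 := hasDerivAt_rpow_comp (hasDerivAt_A_r hr w) (A_pos hr w) (-(1:ℝ)/2)
  have h := h1.mul h2
  refine h.congr_deriv ?_
  rw [show (-(1:ℝ)/2 - 1) = -(3:ℝ)/2 by norm_num]
  unfold frr
  have hA := A_pos hr w
  rw [rpow_neg_half hA, rpow_neg_three_half hA]
  field_simp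
  ring

/-- derivative of Ψ in w equals Gf -/
lemma hasDerivAt_Psi_w {r : ℝ} (hr : r ≠ 0) (w : ℝ) :
    HasDerivAt (fun w' => Ψ r w') (Gf r w) w := by
  have hA := A_pos hr w
  have h2w : HasDerivAt (fun w' : ℝ => 2 * w') 2 w := by
    simpa using (hasDerivAt_id w).const_mul 2
  have hsin : HasDerivAt (fun w' : ℝ => Real.sin (2 * w')) (Real.cos (2*w) * 2) w :=
    (Real.hasDerivAt_sin (2*w)).comp w h2w
  have hA1 : HasDerivAt (fun w' => Afun r w' + 1) (2 * Real.sin (2*w) / r ^ 2) w :=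
    (hasDerivAt_A_w r w).add_const 1
  have hAp := hasDerivAt_rpow_comp (hasDerivAt_A_w r w) (A_pos hr w) (-(1:ℝ)/2)
  have h := (hsin.mul (hA1.mul hAp)).div_const (2*r^2)
  refine h.congr_deriv ?_
  symm
  simp only [Pi.mul_apply]
  rw [show (-(1:ℝ)/2 - 1) = -(3:ℝ)/2 by norm_num]
  unfold Gf frr fr f Hf
  rw [Real.cos_two_mul, Real.sin_two_mul]
  rw [rpow_neg_half hA, rpow_neg_three_half hA, rpow_three_half hA]
  have ha : Afun r w = 1 + 2 * Real.sin w ^ 2 / r ^ 2 := rfl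
  have hsc : Real.sin w ^ 2 + Real.cos w ^ 2 = 1 := Real.sin_sq_add_cos_sq w
  set a := Afun r w
  set B := a ^ ((1:ℝ)/2) with hB
  set s := Real.sin w
  set c := Real.cos w
  have ha0 : a ≠ 0 := hA.ne'
  linear_combination (norm := (field_simp; ring))
    (-(2*s^2*B*(a-1)/(r^4*a^2) + 2*(a+1)*B/(a*r^2))) * hsc
    + (-((3*r^4*a^2 - 2*r^2*(1-s^2)*a + (r^4 - 2*r^2*s^2 + 4*s^2)) * B / (2*r^4*a^2))) * ha

/-- Joint differentiability of a parametric interval integral with moving endpoint. -/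
lemma keyJ (g g' : ℝ → ℝ → ℝ)
    (hg : ContinuousOn (fun p : ℝ × ℝ => g p.1 p.2) {p : ℝ × ℝ | p.1 ≠ 0})
    (hg' : ContinuousOn (fun p : ℝ × ℝ => g' p.1 p.2) {p : ℝ × ℝ | p.1 ≠ 0})
    (hd : ∀ r : ℝ, r ≠ 0 → ∀ w : ℝ, HasDerivAt (fun ρ => g ρ w) (g' r w) r)
    (a r₀ x₀ : ℝ) (hr : r₀ ≠ 0) :
    HasFDerivAt (fun p : ℝ × ℝ => ∫ w in a..p.2, g p.1 w)
      ((∫ w in a..x₀, g' r₀ w) • ContinuousLinearMap.fst ℝ ℝ ℝ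
        + (g r₀ x₀) • ContinuousLinearMap.snd ℝ ℝ ℝ) (r₀, x₀) := by
  have hopen : IsOpen {p : ℝ × ℝ | p.1 ≠ 0} :=
    isOpen_compl_iff.mpr (isClosed_eq continuous_fst continuous_const)
  -- slice continuity
  have hslice : ∀ ρ : ℝ, ρ ≠ 0 → Continuous (fun w => g ρ w) := by
    intro ρ hρ
    rw [continuous_iff_continuousAt]
    intro w
    exact (hg.continuousAt (hopen.mem_nhds hρ)).comp
      ((continuous_const.prodMk continuous_id).continuousAt)
  have hslice' : ∀ ρ : ℝ, ρ ≠ 0 → Continuous (fun w => g' ρ w) := by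
    intro ρ hρ
    rw [continuous_iff_continuousAt]
    intro w
    exact (hg'.continuousAt (hopen.mem_nhds hρ)).comp
      ((continuous_const.prodMk continuous_id).continuousAt)
  -- Part B : derivative in the parameter, fixed endpoints
  set ε := |r₀| / 2 with hε
  have hεpos : 0 < ε := by positivity
  have hne : ∀ ρ : ℝ, ρ ∈ Metric.closedBall r₀ ε → ρ ≠ 0 := by
    intro ρ hρ
    rw [Metric.mem_closedBall, Real.dist_eq] at hρ
    intro h0
    rw [h0] at hρ
    simp only [zero_sub, abs_neg] at hρ
    have : |r₀| > 0 := abs_pos.mpr hr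
    linarith
  have hKcompact : IsCompact ((Metric.closedBall r₀ ε) ×ˢ uIcc a x₀) :=
    (isCompact_closedBall r₀ ε).prod isCompact_uIcc
  have hKsub : ((Metric.closedBall r₀ ε) ×ˢ uIcc a x₀) ⊆ {p : ℝ × ℝ | p.1 ≠ 0} := by
    rintro ⟨ρ, w⟩ ⟨h1, _⟩
    exact hne ρ h1
  obtain ⟨C, hC⟩ := hKcompact.exists_bound_of_continuousOn (hg'.mono hKsub)
  have hB : HasDerivAt (fun ρ => ∫ w in a..x₀, g ρ w) (∫ w in a..x₀, g' r₀ w) r₀ := by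
    refine (intervalIntegral.hasDerivAt_integral_of_dominated_loc_of_deriv_le (Metric.ball_mem_nhds r₀ hεpos)
      ?_ ?_ ?_ (bound := fun _ => C) ?_ ?_ ?_).2
    · filter_upwards [eventually_ne_nhds hr] with ρ hρ
      exact ((hslice ρ hρ).aestronglyMeasurable).restrict
    · exact ((hslice r₀ hr).intervalIntegrable a x₀)
    · exact ((hslice' r₀ hr).aestronglyMeasurable).restrict
    · filter_upwards with w hw ρ hρ
      have hρK : (ρ, w) ∈ (Metric.closedBall r₀ ε) ×ˢ uIcc a x₀ :=
        ⟨Metric.ball_subset_closedBall hρ, uIoc_subset_uIcc hw⟩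
      simpa using hC _ hρK
    · exact intervalIntegrable_const
    · filter_upwards with w _ ρ hρ
      exact hd ρ (hne ρ (Metric.ball_subset_closedBall hρ)) w
  -- Part B' : as an FDeriv through `fst`
  have hB' : HasFDerivAt (fun p : ℝ × ℝ => ∫ w in a..x₀, g p.1 w)
      ((∫ w in a..x₀, g' r₀ w) • ContinuousLinearMap.fst ℝ ℝ ℝ) (r₀, x₀) :=
    by have := HasDerivAt.comp_hasFDerivAt (f := Prod.fst) (r₀, x₀) hB (hasFDerivAt_fst (𝕜 := ℝ) (p := (r₀, x₀))); exact this
  -- Part C : moving endpoint part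
  have hC2 : HasFDerivAt (fun p : ℝ × ℝ => ∫ w in x₀..p.2, g p.1 w)
      ((g r₀ x₀) • ContinuousLinearMap.snd ℝ ℝ ℝ) (r₀, x₀) := by
    refine hasFDerivAt_iff_isLittleO.mpr (isLittleO_iff.mpr ?_)
    intro c hc
    have hca : ContinuousAt (fun p : ℝ × ℝ => g p.1 p.2) (r₀, x₀) :=
      hg.continuousAt (hopen.mem_nhds hr)
    have hev : ∀ᶠ p : ℝ × ℝ in 𝓝 (r₀, x₀), ‖g p.1 p.2 - g r₀ x₀‖ ≤ c ∧ p.1 ≠ 0 := by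
      have h1 : ∀ᶠ p : ℝ × ℝ in 𝓝 (r₀, x₀), ‖g p.1 p.2 - g r₀ x₀‖ ≤ c := by
        have := hca (Metric.closedBall_mem_nhds (g r₀ x₀) hc)
        filter_upwards [this] with p hp
        simpa [Real.dist_eq, Metric.mem_closedBall, dist_eq_norm] using hp
      have h2 : ∀ᶠ p : ℝ × ℝ in 𝓝 (r₀, x₀), p.1 ≠ 0 :=
        hopen.mem_nhds (show ((r₀,x₀):ℝ×ℝ) ∈ {p : ℝ × ℝ | p.1 ≠ 0} from hr)
      exact h1.and h2
    obtain ⟨δ, hδpos, hδ⟩ := Metric.eventually_nhds_iff.mp hev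
    rw [Metric.eventually_nhds_iff]
    refine ⟨δ, hδpos, ?_⟩
    intro p hp
    have hp1 : p.1 ≠ 0 := (hδ hp).2
    -- all w in the moving interval are δ-close
    have hw_close : ∀ w ∈ Set.uIoc x₀ p.2, ‖g p.1 w - g r₀ x₀‖ ≤ c := by
      intro w hw
      have hw' : |w - x₀| ≤ |p.2 - x₀| := by
        rcases le_total x₀ p.2 with h | h
        · rw [uIoc_of_le h] at hw
          rw [abs_of_nonneg (by linarith [hw.1.le] : (0:ℝ) ≤ w - x₀),
            abs_of_nonneg (by linarith : (0:ℝ) ≤ p.2 - x₀)]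
          linarith [hw.2]
        · rw [uIoc_of_ge h] at hw
          rw [abs_of_nonpos (by linarith [hw.2] : w - x₀ ≤ 0),
            abs_of_nonpos (by linarith : p.2 - x₀ ≤ 0)]
          linarith [hw.1.le]
      have hdist : dist (p.1, w) (r₀, x₀) < δ := by
        rw [Prod.dist_eq] at hp ⊢
        have h2 : dist w x₀ ≤ dist p.2 x₀ := by
          rw [Real.dist_eq, Real.dist_eq]; exact hw'
        exact lt_of_le_of_lt (max_le_max le_rfl h2) hp
      exact (hδ hdist).1
    -- the integral estimate
    have hint : IntervalIntegrable (fun w => g p.1 w) volume x₀ p.2 :=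
      (hslice p.1 hp1).intervalIntegrable x₀ p.2
    have key : (∫ w in x₀..p.2, g p.1 w) - (g r₀ x₀) * (p.2 - x₀)
        = ∫ w in x₀..p.2, (g p.1 w - g r₀ x₀) := by
      rw [intervalIntegral.integral_sub hint intervalIntegrable_const,
        intervalIntegral.integral_const]
      simp [smul_eq_mul, mul_comm]
    have hest : ‖(∫ w in x₀..p.2, g p.1 w) - (g r₀ x₀) * (p.2 - x₀)‖ ≤ c * |p.2 - x₀| := by
      rw [key]
      exact intervalIntegral.norm_integral_le_of_norm_le_const hw_close
    have hsnd : |p.2 - x₀| ≤ ‖p - (r₀, x₀)‖ := by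
      have := norm_snd_le (p - (r₀, x₀))
      simpa [Prod.snd_sub, Real.norm_eq_abs] using this
    calc ‖(∫ w in x₀..p.2, g p.1 w) - (∫ w in x₀..(r₀, x₀).2, g (r₀,x₀).1 w)
            - ((g r₀ x₀) • ContinuousLinearMap.snd ℝ ℝ ℝ) (p - (r₀, x₀))‖
        = ‖(∫ w in x₀..p.2, g p.1 w) - (g r₀ x₀) * (p.2 - x₀)‖ := by
          simp [ContinuousLinearMap.smul_apply, smul_eq_mul]
      _ ≤ c * |p.2 - x₀| := hest
      _ ≤ c * ‖p - (r₀, x₀)‖ := by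
          exact mul_le_mul_of_nonneg_left hsnd hc.le
  -- Combine
  have hsum := hB'.add hC2
  refine hsum.congr_of_eventuallyEq ?_
  filter_upwards [hopen.mem_nhds (show ((r₀,x₀):ℝ×ℝ) ∈ {p : ℝ × ℝ | p.1 ≠ 0} from hr)] with p hp
  have hp1 : p.1 ≠ 0 := hp
  rw [← intervalIntegral.integral_add_adjacent_intervals
    ((hslice p.1 hp1).intervalIntegrable a x₀) ((hslice p.1 hp1).intervalIntegrable x₀ p.2)]
  rfl

variable {S : Set (ℝ × ℝ)} {u : ℝ → ℝ → ℝ} {t r : ℝ}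

lemma curve_t (t r : ℝ) : HasDerivAt (fun s : ℝ => ((s, r) : ℝ × ℝ)) (1, 0) t :=
  HasDerivAt.prodMk (hasDerivAt_id t) (hasDerivAt_const t r)

lemma curve_r (t r : ℝ) : HasDerivAt (fun ρ : ℝ => ((t, ρ) : ℝ × ℝ)) (0, 1) r :=
  HasDerivAt.prodMk (hasDerivAt_const r t) (hasDerivAt_id r)

lemma extract_t (hS : IsOpen S) (hu : ContDiffOn ℝ 2 (Function.uncurry u) S)
    (hq : (t, r) ∈ S) :
    HasDerivAt (fun s => u s r) (pdt u t r) t := by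
  have hU : DifferentiableAt ℝ (Function.uncurry u) (t, r) :=
    (hu.differentiableOn (by norm_num) (t, r) hq).differentiableAt (hS.mem_nhds hq)
  have h := hU.hasFDerivAt.comp_hasDerivAt t (curve_t t r)
  exact h.differentiableAt.hasDerivAt

lemma extract_r (hS : IsOpen S) (hu : ContDiffOn ℝ 2 (Function.uncurry u) S)
    (hq : (t, r) ∈ S) :
    HasDerivAt (fun ρ => u t ρ) (pdr u t r) r := by
  have hU : DifferentiableAt ℝ (Function.uncurry u) (t, r) :=
    (hu.differentiableOn (by norm_num) (t, r) hq).differentiableAt (hS.mem_nhds hq)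
  have h := hU.hasFDerivAt.comp_hasDerivAt r (curve_r t r)
  exact h.differentiableAt.hasDerivAt

lemma extract_tt (hS : IsOpen S) (hu : ContDiffOn ℝ 2 (Function.uncurry u) S)
    (hq : (t, r) ∈ S) :
    HasDerivAt (fun s => pdt u s r) (pdt (pdt u) t r) t := by
  have hV : ContDiffOn ℝ 1 (fderiv ℝ (Function.uncurry u)) S :=
    hu.fderiv_of_isOpen hS (by norm_num)
  have hVd : DifferentiableAt ℝ (fderiv ℝ (Function.uncurry u)) (t, r) :=
    (hV.differentiableOn (by norm_num) (t, r) hq).differentiableAt (hS.mem_nhds hq)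
  -- the auxiliary function
  have hdiff2 : DifferentiableAt ℝ
      (fun s => (fderiv ℝ (Function.uncurry u) (s, r)) (1, 0)) t := by
    have h1 : DifferentiableAt ℝ (fun s : ℝ => ((s, r) : ℝ × ℝ)) t :=
      (curve_t t r).differentiableAt
    exact (hVd.comp t h1).clm_apply (differentiableAt_const _)
  have hev : (fun s => pdt u s r)
      =ᶠ[𝓝 t] (fun s => (fderiv ℝ (Function.uncurry u) (s, r)) (1, 0)) := by
    have hmem : ∀ᶠ s in 𝓝 t, (s, r) ∈ S := by
      have : ContinuousAt (fun s : ℝ => ((s, r) : ℝ × ℝ)) t :=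
        (curve_t t r).differentiableAt.continuousAt
    
      exact this (hS.mem_nhds hq)
    filter_upwards [hmem] with s hs
    have hU : DifferentiableAt ℝ (Function.uncurry u) (s, r) :=
      (hu.differentiableOn (by norm_num) (s, r) hs).differentiableAt (hS.mem_nhds hs)
    exact (hU.hasFDerivAt.comp_hasDerivAt s (curve_t s r)).deriv
  have := (hev.differentiableAt_iff.mpr hdiff2).hasDerivAt
  exact this

lemma extract_rr (hS : IsOpen S) (hu : ContDiffOn ℝ 2 (Function.uncurry u) S)
    (hq : (t, r) ∈ S) :
    HasDerivAt (fun ρ => pdr u t ρ) (pdr (pdr u) t r) r := by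
  have hV : ContDiffOn ℝ 1 (fderiv ℝ (Function.uncurry u)) S :=
    hu.fderiv_of_isOpen hS (by norm_num)
  have hVd : DifferentiableAt ℝ (fderiv ℝ (Function.uncurry u)) (t, r) :=
    (hV.differentiableOn (by norm_num) (t, r) hq).differentiableAt (hS.mem_nhds hq)
  have hdiff2 : DifferentiableAt ℝ
      (fun ρ => (fderiv ℝ (Function.uncurry u) (t, ρ)) (0, 1)) r := by
    have h1 : DifferentiableAt ℝ (fun ρ : ℝ => ((t, ρ) : ℝ × ℝ)) r :=
      (curve_r t r).differentiableAt
    exact (hVd.comp r h1).clm_apply (differentiableAt_const _)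
  have hev : (fun ρ => pdr u t ρ)
      =ᶠ[𝓝 r] (fun ρ => (fderiv ℝ (Function.uncurry u) (t, ρ)) (0, 1)) := by
    have hmem : ∀ᶠ ρ in 𝓝 r, (t, ρ) ∈ S := by
      have : ContinuousAt (fun ρ : ℝ => ((t, ρ) : ℝ × ℝ)) r :=
        (curve_r t r).differentiableAt.continuousAt
      exact this (hS.mem_nhds hq)
    filter_upwards [hmem] with ρ hρ
    have hU : DifferentiableAt ℝ (Function.uncurry u) (t, ρ) :=
      (hu.differentiableOn (by norm_num) (t, ρ) hρ).differentiableAt (hS.mem_nhds hρ)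
    exact (hU.hasFDerivAt.comp_hasDerivAt ρ (curve_r t ρ)).deriv
  exact (hev.differentiableAt_iff.mpr hdiff2).hasDerivAt

/-! ### Continuity lemmas -/

lemma contA_slice {r : ℝ} : Continuous (fun w => Afun r w) := by
  unfold Afun; fun_prop

lemma cont_rpow_slice {r : ℝ} (hr : r ≠ 0) (c : ℝ) :
    Continuous (fun w => (Afun r w) ^ c) :=
  contA_slice.rpow_const (fun w => Or.inl (A_pos hr w).ne')

lemma cont_f {r : ℝ} (hr : r ≠ 0) : Continuous (f r) := cont_rpow_slice hr _

lemma cont_fr {r : ℝ} (hr : r ≠ 0) : Continuous (fr r) := by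
  unfold fr
  exact (by fun_prop : Continuous (fun w => -2 * Real.sin w ^ 2 / r ^ 3)).mul
    (cont_rpow_slice hr _)

lemma cont_frr {r : ℝ} (hr : r ≠ 0) : Continuous (frr r) := by
  unfold frr
  exact ((by fun_prop : Continuous (fun w => 6 * Real.sin w ^ 2 / r ^ 4)).mul
    (cont_rpow_slice hr _)).sub
    ((by fun_prop : Continuous (fun w => 4 * Real.sin w ^ 4 / r ^ 6)).mul
    (cont_rpow_slice hr _))

lemma cont_Hf {r : ℝ} (hr : r ≠ 0) : Continuous (Hf r) := by
  unfold Hf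
  exact ((continuous_const.mul ((cont_rpow_slice hr _).sub (cont_rpow_slice hr _))).add
    (cont_rpow_slice hr _)).sub (cont_rpow_slice hr _)

lemma cont_Gf {r : ℝ} (hr : r ≠ 0) : Continuous (Gf r) := by
  unfold Gf
  exact (((cont_frr hr).neg.sub (continuous_const.mul (cont_fr hr))).add
    (continuous_const.mul (cont_f hr))).sub (continuous_const.mul (cont_Hf hr))

/-! ### Joint continuity -/

lemma contA_joint : ContinuousOn (fun p : ℝ × ℝ => Afun p.1 p.2) {p : ℝ × ℝ | p.1 ≠ 0} := by
  unfold Afun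
  refine continuousOn_const.add (ContinuousOn.div ?_ ?_ ?_)
  · exact (continuous_const.mul ((Real.continuous_sin.comp continuous_snd).pow 2)).continuousOn
  · exact (continuous_fst.pow 2).continuousOn
  · exact fun p hp => pow_ne_zero 2 hp

lemma cont_rpow_joint (c : ℝ) :
    ContinuousOn (fun p : ℝ × ℝ => (Afun p.1 p.2) ^ c) {p : ℝ × ℝ | p.1 ≠ 0} :=
  contA_joint.rpow_const (fun p hp => Or.inl (A_pos hp p.2).ne')

lemma cont_f_joint : ContinuousOn (fun p : ℝ × ℝ => f p.1 p.2) {p : ℝ × ℝ | p.1 ≠ 0} :=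
  cont_rpow_joint _

lemma cont_fr_joint : ContinuousOn (fun p : ℝ × ℝ => fr p.1 p.2) {p : ℝ × ℝ | p.1 ≠ 0} := by
  unfold fr
  refine ContinuousOn.mul (ContinuousOn.div ?_ ?_ ?_) (cont_rpow_joint _)
  · exact (continuous_const.mul ((Real.continuous_sin.comp continuous_snd).pow 2)).continuousOn
  · exact (continuous_fst.pow 3).continuousOn
  · exact fun p hp => pow_ne_zero 3 hp

lemma cont_frr_joint : ContinuousOn (fun p : ℝ × ℝ => frr p.1 p.2) {p : ℝ × ℝ | p.1 ≠ 0} := by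
  unfold frr
  refine ContinuousOn.sub (ContinuousOn.mul (ContinuousOn.div ?_ ?_ ?_) (cont_rpow_joint _))
    (ContinuousOn.mul (ContinuousOn.div ?_ ?_ ?_) (cont_rpow_joint _))
  · exact (continuous_const.mul ((Real.continuous_sin.comp continuous_snd).pow 2)).continuousOn
  · exact (continuous_fst.pow 4).continuousOn
  · exact fun p hp => pow_ne_zero 4 hp
  · exact (continuous_const.mul ((Real.continuous_sin.comp continuous_snd).pow 4)).continuousOn
  · exact (continuous_fst.pow 6).continuousOn
  · exact fun p hp => pow_ne_zero 6 hp

/-! ### Integral identities -/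

lemma Psi_boundary {r : ℝ} (N : ℕ) : Ψ r ((N : ℝ) * Real.pi) = 0 := by
  unfold Ψ
  have : (2:ℝ) * ((N:ℝ) * Real.pi) = ((2*N : ℕ) : ℝ) * Real.pi := by push_cast; ring
  rw [this, Real.sin_nat_mul_pi]
  simp

lemma integral_Gf {r : ℝ} (hr : r ≠ 0) (N : ℕ) (x : ℝ) :
    ∫ w in ((N:ℝ) * Real.pi)..x, Gf r w = Ψ r x := by
  have h := intervalIntegral.integral_eq_sub_of_hasDerivAt
    (f := Ψ r) (f' := Gf r) (a := (N:ℝ) * Real.pi) (b := x)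
    (fun w _ => hasDerivAt_Psi_w hr w) ((cont_Gf hr).intervalIntegrable _ _)
  rw [h, Psi_boundary N, sub_zero]

lemma integral_Gf_split {r : ℝ} (hr : r ≠ 0) (a x : ℝ) :
    ∫ w in a..x, Gf r w
      = -(∫ w in a..x, frr r w) - (2/r) * (∫ w in a..x, fr r w)
        + (2/r^2) * (∫ w in a..x, f r w) - (1/2) * (∫ w in a..x, Hf r w) := by
  have i_f : IntervalIntegrable (f r) volume a x := (cont_f hr).intervalIntegrable _ _
  have i_fr : IntervalIntegrable (fr r) volume a x := (cont_fr hr).intervalIntegrable _ _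
  have i_frr : IntervalIntegrable (frr r) volume a x := (cont_frr hr).intervalIntegrable _ _
  have i_H : IntervalIntegrable (Hf r) volume a x := (cont_Hf hr).intervalIntegrable _ _
  have i_nfrr : IntervalIntegrable (fun w => -frr r w) volume a x := i_frr.neg
  have e1 : IntervalIntegrable (fun w => -frr r w - (2/r) * fr r w) volume a x :=
    i_nfrr.sub (i_fr.const_mul _)
  have e2 : IntervalIntegrable (fun w => -frr r w - (2/r) * fr r w + (2/r^2) * f r w)
      volume a x := e1.add (i_f.const_mul _)
  calc ∫ w in a..x, Gf r w
      = ∫ w in a..x, ((-frr r w - (2/r) * fr r w + (2/r^2) * f r w) - (1/2) * Hf r w) := rfl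
    _ = (∫ w in a..x, (-frr r w - (2/r) * fr r w + (2/r^2) * f r w))
          - ∫ w in a..x, (1/2) * Hf r w :=
        intervalIntegral.integral_sub e2 (i_H.const_mul _)
    _ = ((∫ w in a..x, (-frr r w - (2/r) * fr r w)) + ∫ w in a..x, (2/r^2) * f r w)
          - ∫ w in a..x, (1/2) * Hf r w := by
        rw [intervalIntegral.integral_add e1 (i_f.const_mul _)]
    _ = (((∫ w in a..x, -frr r w) - ∫ w in a..x, (2/r) * fr r w) + ∫ w in a..x, (2/r^2) * f r w)
          - ∫ w in a..x, (1/2) * Hf r w := by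
        rw [intervalIntegral.integral_sub i_nfrr (i_fr.const_mul _)]
    _ = -(∫ w in a..x, frr r w) - (2/r) * (∫ w in a..x, fr r w)
        + (2/r^2) * (∫ w in a..x, f r w) - (1/2) * (∫ w in a..x, Hf r w) := by
        rw [intervalIntegral.integral_neg, intervalIntegral.integral_const_mul,
          intervalIntegral.integral_const_mul, intervalIntegral.integral_const_mul]

end SK

set_option maxHeartbeats 4000000 in
/-- Wave equation for the first auxiliary function
`Φ₁(t,r) = ∫_{N₁π}^{u(t,r)} A(r,w)^{1/2} dw`. -/
theorem wave_equation_Phi1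
    (T : ℝ) (N₁ : ℕ) (u : ℝ → ℝ → ℝ)
    (hu : ContDiffOn ℝ 2 (Function.uncurry u) (Set.Ioo 0 T ×ˢ Set.Ioi (0:ℝ)))
    (hPDE : ∀ t ∈ Set.Ioo (0:ℝ) T, ∀ r ∈ Set.Ioi (0:ℝ),
      (1 + 2 * Real.sin (u t r) ^ 2 / r ^ 2) * (pdt (pdt u) t r - pdr (pdr u) t r)
        - (2 / r) * pdr u t r
        + (Real.sin (2 * u t r) / r ^ 2) *
            (1 + (pdt u t r) ^ 2 - (pdr u t r) ^ 2 + Real.sin (u t r) ^ 2 / r ^ 2) = 0)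
    (Φ₁ : ℝ → ℝ → ℝ)
    (hΦ₁ : ∀ t r, Φ₁ t r = ∫ w in ((N₁ : ℝ) * Real.pi)..(u t r), (Afun r w) ^ ((1:ℝ)/2)) :
    ∀ t ∈ Set.Ioo (0:ℝ) T, ∀ r ∈ Set.Ioi (0:ℝ),
      pdt (pdt Φ₁) t r - pdr (pdr Φ₁) t r - (2 / r) * pdr Φ₁ t r
        = -(2 / r ^ 2) * Φ₁ t r
          + (1 / 2) * ∫ w in ((N₁ : ℝ) * Real.pi)..(u t r),
              (3 * ((Afun r w) ^ ((3:ℝ)/2) - (Afun r w) ^ ((1:ℝ)/2))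
                + (Afun r w) ^ (-(1:ℝ)/2) - (Afun r w) ^ (-(3:ℝ)/2)) := by
  intro t ht r hrIoi
  have hr0 : (0:ℝ) < r := hrIoi
  have hr : r ≠ 0 := ne_of_gt hr0
  have hS : IsOpen (Set.Ioo (0:ℝ) T ×ˢ Set.Ioi (0:ℝ)) := isOpen_Ioo.prod isOpen_Ioi
  have hq : (t, r) ∈ Set.Ioo (0:ℝ) T ×ˢ Set.Ioi (0:ℝ) := ⟨ht, hrIoi⟩
  set a : ℝ := (N₁ : ℝ) * Real.pi with ha_def
  -- first and second partial derivatives of u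
  have hut : HasDerivAt (fun s => u s r) (pdt u t r) t := SK.extract_t hS hu hq
  have hur : HasDerivAt (fun ρ => u t ρ) (pdr u t r) r := SK.extract_r hS hu hq
  have hutt : HasDerivAt (fun s => pdt u s r) (pdt (pdt u) t r) t := SK.extract_tt hS hu hq
  have hurr : HasDerivAt (fun ρ => pdr u t ρ) (pdr (pdr u) t r) r := SK.extract_rr hS hu hq
  have hApos : 0 < Afun r (u t r) := SK.A_pos hr (u t r)
  -- first time derivative formula, valid on a neighborhood of t
  have hpdt_formula : ∀ s ∈ Set.Ioo (0:ℝ) T,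
      pdt Φ₁ s r = SK.f r (u s r) * pdt u s r := by
    intro s hs
    have hus : HasDerivAt (fun s' => u s' r) (pdt u s r) s :=
      SK.extract_t hS hu ⟨hs, hrIoi⟩
    have hF : HasDerivAt (fun x => ∫ w in a..x, SK.f r w) (SK.f r (u s r)) (u s r) :=
      ((SK.cont_f hr).integral_hasStrictDerivAt a (u s r)).hasDerivAt
    have hcomp := hF.comp s hus
    show deriv (fun s' => Φ₁ s' r) s = _
    have hfunext : (fun s' => Φ₁ s' r) = (fun s' => ∫ w in a..(u s' r), SK.f r w) := by
      funext s'; exact hΦ₁ s' r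
    rw [hfunext]
    exact hcomp.deriv
  -- second time derivative
  have hpdtt : pdt (pdt Φ₁) t r
      = (SK.fw r (u t r) * pdt u t r) * pdt u t r + SK.f r (u t r) * pdt (pdt u) t r := by
    have hfc : HasDerivAt (fun s => SK.f r (u s r)) (SK.fw r (u t r) * pdt u t r) t :=
      by have := HasDerivAt.comp t (SK.hasDerivAt_f_w hr (u t r)) hut; exact this
    have hprod := hfc.mul hutt
    have hev : (fun s => pdt Φ₁ s r) =ᶠ[nhds t] (fun s => SK.f r (u s r) * pdt u s r) := by
      filter_upwards [Ioo_mem_nhds ht.1 ht.2] with s hs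
      exact hpdt_formula s hs
    show deriv (fun s => pdt Φ₁ s r) t = _
    rw [hev.deriv_eq]
    exact hprod.deriv
  -- first radial derivative formula, valid on a neighborhood of r
  have hpdr_formula : ∀ ρ ∈ Set.Ioi (0:ℝ),
      pdr Φ₁ t ρ = (∫ w in a..(u t ρ), SK.fr ρ w) + SK.f ρ (u t ρ) * pdr u t ρ := by
    intro ρ hρ
    have hρ0 : ρ ≠ 0 := ne_of_gt hρ
    have huρ : HasDerivAt (fun ρ' => u t ρ') (pdr u t ρ) ρ :=
      SK.extract_r hS hu ⟨ht, hρ⟩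
    have hγ : HasDerivAt (fun ρ' => ((ρ', u t ρ') : ℝ × ℝ)) (1, pdr u t ρ) ρ :=
      HasDerivAt.prodMk (hasDerivAt_id ρ) huρ
    have hJ := (SK.keyJ SK.f SK.fr SK.cont_f_joint SK.cont_fr_joint
      (fun r hr w => SK.hasDerivAt_f_r hr w) a ρ (u t ρ) hρ0).comp_hasDerivAt ρ hγ
    have hval : (((∫ w in a..(u t ρ), SK.fr ρ w) • ContinuousLinearMap.fst ℝ ℝ ℝ
        + (SK.f ρ (u t ρ)) • ContinuousLinearMap.snd ℝ ℝ ℝ) : ℝ × ℝ →L[ℝ] ℝ) (1, pdr u t ρ)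
        = (∫ w in a..(u t ρ), SK.fr ρ w) + SK.f ρ (u t ρ) * pdr u t ρ := by
      simp
    show deriv (fun ρ' => Φ₁ t ρ') ρ = _
    have hfunext : (fun ρ' => Φ₁ t ρ') = (fun ρ' => ∫ w in a..(u t ρ'), SK.f ρ' w) := by
      funext ρ'; exact hΦ₁ t ρ'
    rw [hfunext, ← hval]
    exact hJ.deriv
  -- second radial derivative
  have hpdrr : pdr (pdr Φ₁) t r
      = ((∫ w in a..(u t r), SK.frr r w) + SK.fr r (u t r) * pdr u t r)
        + ((SK.fr r (u t r) + SK.fw r (u t r) * pdr u t r) * pdr u t r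
            + SK.f r (u t r) * pdr (pdr u) t r) := by
    have hγr : HasDerivAt (fun ρ' => ((ρ', u t ρ') : ℝ × ℝ)) (1, pdr u t r) r :=
      HasDerivAt.prodMk (hasDerivAt_id r) hur
    have hterm1 := (SK.keyJ SK.fr SK.frr SK.cont_fr_joint SK.cont_frr_joint
      (fun r hr w => SK.hasDerivAt_fr_r hr w) a r (u t r) hr).comp_hasDerivAt r hγr
    have hterm1' : HasDerivAt (fun ρ => ∫ w in a..(u t ρ), SK.fr ρ w)
        ((∫ w in a..(u t r), SK.frr r w) + SK.fr r (u t r) * pdr u t r) r := by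
      refine hterm1.congr_deriv ?_
      simp
    -- derivative of ρ ↦ f ρ (u t ρ)
    have hterm2 : HasDerivAt (fun ρ => SK.f ρ (u t ρ))
        (SK.fr r (u t r) + SK.fw r (u t r) * pdr u t r) r := by
      have hsinU : HasDerivAt (fun ρ => Real.sin (u t ρ)) (Real.cos (u t r) * pdr u t r) r :=
        (Real.hasDerivAt_sin (u t r)).comp r hur
      have hsq := hsinU.pow 2
      have hden : HasDerivAt (fun ρ : ℝ => ρ ^ 2) (2 * r) r := by
        simpa using hasDerivAt_pow 2 r
      have hquot := ((hsq.const_mul (2:ℝ)).div hden (pow_ne_zero 2 hr))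
      have hA : HasDerivAt (fun ρ => Afun ρ (u t ρ)) _ r := hquot.const_add 1
      have hrp := SK.hasDerivAt_rpow_comp hA hApos ((1:ℝ)/2)
      refine hrp.congr_deriv ?_
      simp only [Pi.pow_apply]
      rw [show ((1:ℝ)/2 - 1) = -(1:ℝ)/2 by norm_num]
      unfold SK.fr SK.fw
      rw [Real.sin_two_mul]
      field_simp
      ring
    have hprod := hterm2.mul hurr
    have hsum := hterm1'.add hprod
    have hev : (fun ρ => pdr Φ₁ t ρ) =ᶠ[nhds r]
        (fun ρ => (∫ w in a..(u t ρ), SK.fr ρ w) + SK.f ρ (u t ρ) * pdr u t ρ) := by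
      filter_upwards [isOpen_Ioi.mem_nhds hrIoi] with ρ hρ
      exact hpdr_formula ρ hρ
    show deriv (fun ρ => pdr Φ₁ t ρ) r = _
    rw [hev.deriv_eq]
    exact hsum.deriv
  -- the integral identity
  have hE4 : -(∫ w in a..(u t r), SK.frr r w) - (2/r) * (∫ w in a..(u t r), SK.fr r w)
      + (2/r^2) * (∫ w in a..(u t r), SK.f r w) - (1/2) * (∫ w in a..(u t r), SK.Hf r w)
      = SK.Ψ r (u t r) :=
    (SK.integral_Gf_split hr a (u t r)).symm.trans (SK.integral_Gf hr N₁ (u t r))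
  have hPDE' := hPDE t ht r hrIoi
  have hB2 : ((Afun r (u t r)) ^ ((1:ℝ)/2)) ^ 2 = Afun r (u t r) := SK.sq_rpow_half hApos
  -- rewrite the goal
  have hIF : Φ₁ t r = ∫ w in a..(u t r), SK.f r w := hΦ₁ t r
  have hIH : (∫ w in a..(u t r),
      (3 * ((Afun r w) ^ ((3:ℝ)/2) - (Afun r w) ^ ((1:ℝ)/2))
        + (Afun r w) ^ (-(1:ℝ)/2) - (Afun r w) ^ (-(3:ℝ)/2)))
      = ∫ w in a..(u t r), SK.Hf r w := rfl
  rw [hpdtt, hpdrr, hpdr_formula r hrIoi, hIF, hIH]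
  simp only [SK.f, SK.fw, SK.fr, SK.Ψ] at hE4 ⊢
  rw [SK.rpow_neg_half hApos] at hE4 ⊢
  simp only [Afun] at hE4 hB2 hPDE' ⊢
  linear_combination (norm := (field_simp; ring)) hE4
    + (1 / ((1 + 2 * Real.sin (u t r) ^ 2 / r ^ 2) ^ ((1:ℝ)/2))) * hPDE'
    + ((pdt (pdt u) t r - pdr (pdr u) t r) / ((1 + 2 * Real.sin (u t r) ^ 2 / r ^ 2) ^ ((1:ℝ)/2))
       + Real.sin (2 * u t r) * ((pdt u t r)^2 - (pdr u t r)^2)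
          / (r^2 * (1 + 2 * Real.sin (u t r) ^ 2 / r ^ 2) * ((1 + 2 * Real.sin (u t r) ^ 2 / r ^ 2) ^ ((1:ℝ)/2)))
       - 2 * pdr u t r
          / (r * (1 + 2 * Real.sin (u t r) ^ 2 / r ^ 2) * ((1 + 2 * Real.sin (u t r) ^ 2 / r ^ 2) ^ ((1:ℝ)/2)))
       + Real.sin (2 * u t r) * ((1 + 2 * Real.sin (u t r) ^ 2 / r ^ 2) + 1)
          / (2 * (1 + 2 * Real.sin (u t r) ^ 2 / r ^ 2) * ((1 + 2 * Real.sin (u t r) ^ 2 / r ^ 2) ^ ((1:ℝ)/2)) * r^2)) * hB2
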